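/- For any x ⊆ [n], any two intervals in I(x) = {[i, pr_x(i)] : sg(x)_i = 1} are either disjoint or one contains the other; moreover every such interval is disjoint from *(x). -/
import Mathlib


/-- `c_x(i,j) = |x ∩ [i,j]| - |[i,j] \ x|`. -/
def cfun (x : Finset ℕ) (i j : ℕ) : ℤ :=
  ((Finset.Icc i j ∩ x).card : ℤ) - ((Finset.Icc i j \ x).card : ℤ)

/-- `sg(x)_i = *`: position `i` has no pair in the signature construction. -/
def SgStar (n : ℕ) (x : Finset ℕ) (i : ℕ) : Prop :=
  (i ∈ x ∧ ¬∃ j, i < j ∧ j ≤ n ∧ cfun x i j = 0) ∨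
  (i ∉ x ∧ ¬∃ j, 1 ≤ j ∧ j < i ∧ cfun x j i = 0)

lemma cfun_eq_sum (x : Finset ℕ) (i j : ℕ) :
    cfun x i j = ∑ k ∈ Finset.Icc i j, (if k ∈ x then (1 : ℤ) else -1) := by
  classical
  rw [← Finset.sum_filter_add_sum_filter_not (Finset.Icc i j) (· ∈ x)]
  rw [Finset.sum_ite_of_true (by intro k hk; exact (Finset.mem_filter.mp hk).2),
      Finset.sum_ite_of_false (by intro k hk; exact (Finset.mem_filter.mp hk).2)]
  simp only [Finset.sum_const, nsmul_eq_mul, mul_one, mul_neg_one]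
  rw [cfun, Finset.filter_mem_eq_inter, ← Finset.sdiff_eq_filter]
  ring

lemma cfun_self (x : Finset ℕ) (m : ℕ) :
    cfun x m m = if m ∈ x then 1 else -1 := by
  rw [cfun_eq_sum]; simp

lemma cfun_succ (x : Finset ℕ) (i j : ℕ) (h : i ≤ j + 1) :
    cfun x i (j + 1) = cfun x i j + (if j + 1 ∈ x then 1 else -1) := by
  rw [cfun_eq_sum, cfun_eq_sum, Finset.sum_Icc_succ_top h]

lemma cfun_split (x : Finset ℕ) (a k b : ℕ) (h1 : a ≤ k + 1) (h2 : k ≤ b) :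
    cfun x a b = cfun x a k + cfun x (k + 1) b := by
  induction b, h2 using Nat.le_induction with
  | base =>
    have he : cfun x (k + 1) k = 0 := by
      rw [cfun_eq_sum, Finset.Icc_eq_empty (by omega), Finset.sum_empty]
    omega
  | succ b hb ih =>
    rw [cfun_succ x a b (by omega), cfun_succ x (k + 1) b (by omega), ih]
    ring

/-- Positivity before the first zero. -/
lemma posA (n : ℕ) (x : Finset ℕ) (i j₁ : ℕ) (hi : i ∈ x)
    (hle : IsLeast {j | i < j ∧ j ≤ n ∧ cfun x i j = 0} j₁) :
    ∀ j, i ≤ j → j < j₁ → 1 ≤ cfun x i j := by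
  intro j hij hjlt
  induction j, hij using Nat.le_induction with
  | base => rw [cfun_self]; simp [hi]
  | succ j hj ih =>
    have hprev : 1 ≤ cfun x i j := ih (by omega)
    have hs := cfun_succ x i j (by omega)
    have hne : cfun x i (j + 1) ≠ 0 := by
      intro h0
      have : j₁ ≤ j + 1 := hle.2 ⟨by omega, by
        have := hle.1.2.1; omega, h0⟩
      omega
    split at hs <;> omega

lemma ivtR (x : Finset ℕ) (m b : ℕ) (hm : m ∈ x) (hmb : m ≤ b)
    (hneg : cfun x m b ≤ 0) : ∃ j, m < j ∧ j ≤ b ∧ cfun x m j = 0 := by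
  classical
  have hmm : cfun x m m = 1 := by rw [cfun_self]; simp [hm]
  have hmb' : m < b := by
    rcases Nat.lt_or_ge m b with h | h
    · exact h
    · have : m = b := by omega
      subst this; omega
  have hP : ∃ j, m < j ∧ j ≤ b ∧ cfun x m j ≤ 0 := ⟨b, hmb', le_rfl, hneg⟩
  obtain ⟨hj1, hj2, hj3⟩ := Nat.find_spec hP
  set j := Nat.find hP with hjdef
  have hprev : 1 ≤ cfun x m (j - 1) := by
    rcases Nat.eq_or_lt_of_le (Nat.le_sub_one_of_lt hj1) with h | h
    · rw [← h]; omega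
    · have hnot := Nat.find_min hP (show j - 1 < j by omega)
      push_neg at hnot
      have := hnot h (by omega)
      omega
  have hs := cfun_succ x m (j - 1) (by omega)
  rw [show j - 1 + 1 = j by omega] at hs
  refine ⟨j, hj1, hj2, ?_⟩
  split at hs <;> omega

lemma ivtL (x : Finset ℕ) (a m : ℕ) (hm : m ∉ x) (ham : a ≤ m)
    (hpos : 0 ≤ cfun x a m) : ∃ j, a ≤ j ∧ j < m ∧ cfun x j m = 0 := by
  classical
  have hmm : cfun x m m = -1 := by rw [cfun_self]; simp [hm]
  set P : ℕ → Prop := fun j => a ≤ j ∧ 0 ≤ cfun x j m with hPdef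
  have hPa : P a := ⟨le_rfl, hpos⟩
  set j := Nat.findGreatest P m with hjdef
  have haj : a ≤ j := Nat.le_findGreatest ham hPa
  have hspec : P j := Nat.findGreatest_spec ham hPa
  have hjm : j ≤ m := Nat.findGreatest_le m
  have hjlt : j < m := by
    rcases Nat.eq_or_lt_of_le hjm with h | h
    · exfalso; have := hspec.2; rw [h] at this; omega
    · exact h
  have hnot : ¬ P (j + 1) :=
    Nat.findGreatest_is_greatest (Nat.lt_succ_self j) (by omega)
  have hneg : cfun x (j + 1) m ≤ -1 := by
    by_contra h
    exact hnot ⟨by omega, by omega⟩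
  have hs := cfun_split x j j m (by omega) (by omega)
  rw [cfun_self] at hs
  refine ⟨j, haj, hjlt, ?_⟩
  have := hspec.2
  split at hs <;> omega

lemma nest (n : ℕ) (x : Finset ℕ) (i₁ j₁ i₂ j₂ : ℕ) (h1 : i₁ ∈ x) (h2 : i₂ ∈ x)
    (hp1 : IsLeast {j | i₁ < j ∧ j ≤ n ∧ cfun x i₁ j = 0} j₁)
    (hp2 : IsLeast {j | i₂ < j ∧ j ≤ n ∧ cfun x i₂ j = 0} j₂)
    (hle : i₁ ≤ i₂) :
    Disjoint (Finset.Icc i₁ j₁) (Finset.Icc i₂ j₂) ∨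
      Finset.Icc i₂ j₂ ⊆ Finset.Icc i₁ j₁ := by
  obtain ⟨⟨hi1j1, hj1n, hc1⟩, hmin1⟩ := hp1
  obtain ⟨⟨hi2j2, hj2n, hc2⟩, hmin2⟩ := hp2
  by_cases hd : j₁ < i₂
  · left
    rw [Finset.disjoint_left]
    intro m hm1 hm2
    rw [Finset.mem_Icc] at hm1 hm2
    omega
  · push_neg at hd
    right
    have hj2j1 : j₂ ≤ j₁ := by
      by_contra hcon
      push_neg at hcon
      rcases Nat.eq_or_lt_of_le hle with heq | hlt
      · subst heq
        have := hmin2 ⟨hi1j1, hj1n, hc1⟩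
        omega
      · have hA1 : 1 ≤ cfun x i₁ (i₂ - 1) :=
          posA n x i₁ j₁ h1 ⟨⟨hi1j1, hj1n, hc1⟩, hmin1⟩ (i₂ - 1) (by omega) (by omega)
        have hA2 : 1 ≤ cfun x i₂ j₁ :=
          posA n x i₂ j₂ h2 ⟨⟨hi2j2, hj2n, hc2⟩, hmin2⟩ j₁ hd hcon
        have hsplit := cfun_split x i₁ (i₂ - 1) j₁ (by omega) (by omega)
        rw [show i₂ - 1 + 1 = i₂ by omega] at hsplit
        omega
    exact Finset.Icc_subset_Icc hle hj2j1

/-- any two intervals `[i, pr_x(i)]` (for `sg(x)_i = 1`) are disjoint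
or nested, and each such interval avoids the starred positions. -/
theorem stmt_10 (n : ℕ) (x : Finset ℕ) (hx : x ⊆ Finset.Icc 1 n)
    (i₁ j₁ i₂ j₂ : ℕ) (h1 : i₁ ∈ x) (h2 : i₂ ∈ x)
    (hp1 : IsLeast {j | i₁ < j ∧ j ≤ n ∧ cfun x i₁ j = 0} j₁)
    (hp2 : IsLeast {j | i₂ < j ∧ j ≤ n ∧ cfun x i₂ j = 0} j₂) :
    (Disjoint (Finset.Icc i₁ j₁) (Finset.Icc i₂ j₂) ∨
      Finset.Icc i₁ j₁ ⊆ Finset.Icc i₂ j₂ ∨ Finset.Icc i₂ j₂ ⊆ Finset.Icc i₁ j₁) ∧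
    ∀ m ∈ Finset.Icc i₁ j₁, ¬ SgStar n x m := by
  constructor
  · rcases le_total i₁ i₂ with h | h
    · rcases nest n x i₁ j₁ i₂ j₂ h1 h2 hp1 hp2 h with hd | hs
      · exact Or.inl hd
      · exact Or.inr (Or.inr hs)
    · rcases nest n x i₂ j₂ i₁ j₁ h2 h1 hp2 hp1 h with hd | hs
      · exact Or.inl hd.symm
      · exact Or.inr (Or.inl hs)
  · intro m hm hstar
    rw [Finset.mem_Icc] at hm
    obtain ⟨⟨hi1j1, hj1n, hc1⟩, hmin1⟩ := hp1
    have hi1pos : 1 ≤ i₁ := by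
      have := hx h1; rw [Finset.mem_Icc] at this; exact this.1
    rcases hstar with ⟨hmx, hno⟩ | ⟨hmx, hno⟩
    · apply hno
      by_cases hme : m = i₁
      · subst hme
        exact ⟨j₁, hi1j1, hj1n, hc1⟩
      · have hlt : i₁ < m := by omega
        have hA : 1 ≤ cfun x i₁ (m - 1) :=
          posA n x i₁ j₁ h1 ⟨⟨hi1j1, hj1n, hc1⟩, hmin1⟩ (m - 1) (by omega) (by omega)
        have hsplit := cfun_split x i₁ (m - 1) j₁ (by omega) (by omega)
        rw [show m - 1 + 1 = m by omega] at hsplit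
        obtain ⟨j, hj1, hj2, hj3⟩ := ivtR x m j₁ hmx hm.2 (by omega)
        exact ⟨j, hj1, by omega, hj3⟩
    · apply hno
      have hme : m ≠ i₁ := fun h => hmx (h ▸ h1)
      have hlt : i₁ < m := by omega
      have hA : 1 ≤ cfun x i₁ (m - 1) :=
        posA n x i₁ j₁ h1 ⟨⟨hi1j1, hj1n, hc1⟩, hmin1⟩ (m - 1) (by omega) (by omega)
      have hsplit := cfun_split x i₁ (m - 1) m (by omega) (by omega)
      rw [show m - 1 + 1 = m by omega, cfun_self] at hsplit
      have hmm : cfun x m m = -1 := by rw [cfun_self]; simp [hmx]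
      have hpos : 0 ≤ cfun x i₁ m := by
        rw [if_neg hmx] at hsplit; omega
      obtain ⟨j, hja, hjm, hj0⟩ := ivtL x i₁ m hmx (by omega) hpos
      exact ⟨j, by omega, hjm, hj0⟩
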